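/- In the Ramond-Block module Ω_R(λ, a, b), the actions of L_{m,i} and L_{n,j} on the even part ℂ[t²] satisfy the commutation relation: L_{m,i}L_{n,j}f(t²) - L_{n,j}L_{m,i}f(t²) = (n(i+q) - m(j+q)) λ^{m+n}(δ_{i+j,0}(t² - (m+n)qa) + δ_{q,-1}δ_{i+j,1}b) f(t² - (m+n)q). -/

import Mathlib

open Polynomial

/-- Action (3.1) of `L_{m,i}` on the even part `ℂ[t²]` of `Ω_R(λ,a,b)`; a polynomial
`f` in the variable `X` stands for `f(t²)`. -/
noncomputable def LeR (q lam a b : ℂ) (m : ℤ) (i : ℕ) (f : Polynomial ℂ) : Polynomial ℂ :=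
  lam ^ m • (((if i = 0 then X - C ((m : ℂ) * q * a) else 0) +
      (if q = -1 ∧ i = 1 then C b else 0)) * f.comp (X - C ((m : ℂ) * q)))

/-- Action (3.2) of `L_{m,i}` on the odd part `tℂ[t²]` of `Ω_R(λ,a,b)`; a polynomial
`f` in the variable `X` stands for `t·f(t²)`. -/
noncomputable def LoR (q lam a b : ℂ) (m : ℤ) (i : ℕ) (f : Polynomial ℂ) : Polynomial ℂ :=
  lam ^ m • (((if i = 0 then X - C ((m : ℂ) * q * a + (m : ℂ) * q / 2) else 0) +
      (if q = -1 ∧ i = 1 then C b else 0)) * f.comp (X - C ((m : ℂ) * q)))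

/-- Action (3.3) of `G_{m,i}` sending the even part to the odd part of `Ω_R(λ,a,b)`:
`G_{m,i} f(t²) = λ^m δ_{i,0} t f(t² - mq)`. -/
noncomputable def GeoR (q lam : ℂ) (m : ℤ) (i : ℕ) (f : Polynomial ℂ) : Polynomial ℂ :=
  lam ^ m • (if i = 0 then f.comp (X - C ((m : ℂ) * q)) else 0)

/-- Action (3.4) of `G_{m,i}` sending the odd part to the even part of `Ω_R(λ,a,b)`:
`G_{m,i} (t f(t²)) = qλ^m(δ_{i,0}(t² - 2mqa) + 2δ_{q,-1}δ_{i,1}b) f(t² - mq)`. -/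
noncomputable def GoeR (q lam a b : ℂ) (m : ℤ) (i : ℕ) (f : Polynomial ℂ) : Polynomial ℂ :=
  (q * lam ^ m) • (((if i = 0 then X - C (2 * (m : ℂ) * q * a) else 0) +
      (if q = -1 ∧ i = 1 then C (2 * b) else 0)) * f.comp (X - C ((m : ℂ) * q)))

set_option maxHeartbeats 1000000 in
/-- In `Ω_R(λ,a,b)` the operators `L_{m,i}`, `L_{n,j}` on the even part `ℂ[t²]` satisfy
`L_{m,i}L_{n,j}f - L_{n,j}L_{m,i}f
  = (n(i+q) - m(j+q)) λ^{m+n}(δ_{i+j,0}(t² - (m+n)qa) + δ_{q,-1}δ_{i+j,1}b) f(t² - (m+n)q)`. -/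
theorem OmegaR_even_LL_commutator (q lam a b : ℂ) (hq : q ≠ 0) (hlam : lam ≠ 0)
    (m n : ℤ) (i j : ℕ) (f : Polynomial ℂ) :
    LeR q lam a b m i (LeR q lam a b n j f) - LeR q lam a b n j (LeR q lam a b m i f) =
      ((n : ℂ) * ((i : ℂ) + q) - (m : ℂ) * ((j : ℂ) + q)) •
        (lam ^ (m + n) • (((if i + j = 0 then X - C (((m : ℂ) + (n : ℂ)) * q * a) else 0) +
            (if q = -1 ∧ i + j = 1 then C b else 0)) *
          f.comp (X - C (((m : ℂ) + (n : ℂ)) * q)))) := by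
  simp only [LeR]
  rcases i with _ | _ | i <;> rcases j with _ | _ | j <;> by_cases hq1 : q = -1 <;>
    simp only [hq1, Nat.succ_ne_zero, Nat.add_eq_zero, and_false, false_and, true_and, and_true,
      if_true, if_false, reduceIte, Nat.cast_zero, Nat.cast_one, Nat.cast_add, Nat.cast_ofNat,
      Nat.add_eq, Nat.succ.injEq, OfNat.ofNat_ne_zero, OfNat.ofNat_ne_one, one_ne_zero,
      zero_ne_one, Nat.succ_ne_succ, left_eq_add, add_eq_zero,
      add_zero, zero_add, zero_mul, mul_zero, sub_zero, smul_zero, sub_self,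
      smul_comp, mul_comp, add_comp, sub_comp, X_comp, C_comp, zero_comp, neg_comp, one_comp,
      Polynomial.comp_assoc,
      smul_eq_C_mul, zpow_add₀ hlam, map_mul, map_add, map_sub, map_zero, map_one, map_neg]
  all_goals try ring_nf
  all_goals try (simp only [Nat.add_eq_one_iff, Nat.add_eq_zero, false_or, or_false, true_and,
    and_true, and_false, false_and, Nat.succ_ne_zero, OfNat.ofNat_ne_zero,
    OfNat.ofNat_ne_one, or_self, if_false, reduceIte, mul_zero, zero_mul,
    add_zero, zero_add, neg_zero, sub_zero, zero_sub, sub_self, neg_neg])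
  all_goals ring_nf
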